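/- Independent amalgamation preserves symmetry: if in the amalgamation of a span W₁ ← V → W₂ of bilinear monomorphisms all three bilinear forms are symmetric, the amalgam U can be chosen with a symmetric bilinear form. -/

import Mathlib

universe u

/-- Independent amalgamation preserves symmetry: if all three bilinear forms in a span of
bilinear monomorphisms `W₁ ← V → W₂` are symmetric, then the amalgam `U` can be chosen
with a symmetric bilinear form. -/
theorem bilinear_independent_amalgamation_symm {K : Type u} [Field K]
    (V W₁ W₂ : Type u) [AddCommGroup V] [Module K V]
    [AddCommGroup W₁] [Module K W₁] [AddCommGroup W₂] [Module K W₂]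
    (BV : V →ₗ[K] V →ₗ[K] K) (B₁ : W₁ →ₗ[K] W₁ →ₗ[K] K) (B₂ : W₂ →ₗ[K] W₂ →ₗ[K] K)
    (hVs : ∀ x y : V, BV x y = BV y x) (h₁s : ∀ x y : W₁, B₁ x y = B₁ y x)
    (h₂s : ∀ x y : W₂, B₂ x y = B₂ y x)
    (f₁ : V →ₗ[K] W₁) (f₂ : V →ₗ[K] W₂)
    (hf₁ : Function.Injective f₁) (hf₁b : ∀ x y : V, B₁ (f₁ x) (f₁ y) = BV x y)
    (hf₂ : Function.Injective f₂) (hf₂b : ∀ x y : V, B₂ (f₂ x) (f₂ y) = BV x y) :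
    ∃ (U : Type u) (_ : AddCommGroup U) (_ : Module K U)
      (BU : U →ₗ[K] U →ₗ[K] K) (g₁ : W₁ →ₗ[K] U) (g₂ : W₂ →ₗ[K] U),
      (∀ x y : U, BU x y = BU y x) ∧
      Function.Injective g₁ ∧ (∀ x y : W₁, BU (g₁ x) (g₁ y) = B₁ x y) ∧
      Function.Injective g₂ ∧ (∀ x y : W₂, BU (g₂ x) (g₂ y) = B₂ x y) ∧
      g₁ ∘ₗ f₁ = g₂ ∘ₗ f₂ ∧
      LinearMap.range g₁ ⊓ LinearMap.range g₂ = LinearMap.range (g₁ ∘ₗ f₁) := by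
  obtain ⟨C₁, hC₁⟩ := Submodule.exists_isCompl (LinearMap.range f₁)
  obtain ⟨C₂, hC₂⟩ := Submodule.exists_isCompl (LinearMap.range f₂)
  set π₁ : W₁ →ₗ[K] V :=
    ((LinearEquiv.ofInjective f₁ hf₁).symm : LinearMap.range f₁ →ₗ[K] V) ∘ₗ
      (LinearMap.range f₁).linearProjOfIsCompl C₁ hC₁ with hπ₁
  set π₂ : W₂ →ₗ[K] V :=
    ((LinearEquiv.ofInjective f₂ hf₂).symm : LinearMap.range f₂ →ₗ[K] V) ∘ₗ
      (LinearMap.range f₂).linearProjOfIsCompl C₂ hC₂ with hπ₂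
  set κ₁ : W₁ →ₗ[K] C₁ := C₁.linearProjOfIsCompl (LinearMap.range f₁) hC₁.symm with hκ₁
  set κ₂ : W₂ →ₗ[K] C₂ := C₂.linearProjOfIsCompl (LinearMap.range f₂) hC₂.symm with hκ₂
  have key₁ : ∀ w : W₁, f₁ (π₁ w) + (κ₁ w : W₁) = w := by
    intro w
    have h1 : f₁ (π₁ w) = ((LinearMap.range f₁).linearProjOfIsCompl C₁ hC₁ w : W₁) := by
      simp only [hπ₁, LinearMap.comp_apply, LinearEquiv.coe_coe]
      rw [← LinearEquiv.ofInjective_apply f₁ (h := hf₁), LinearEquiv.apply_symm_apply]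
    rw [h1]
    exact Submodule.projection_add_projection_eq_self hC₁ w
  have key₂ : ∀ w : W₂, f₂ (π₂ w) + (κ₂ w : W₂) = w := by
    intro w
    have h1 : f₂ (π₂ w) = ((LinearMap.range f₂).linearProjOfIsCompl C₂ hC₂ w : W₂) := by
      simp only [hπ₂, LinearMap.comp_apply, LinearEquiv.coe_coe]
      rw [← LinearEquiv.ofInjective_apply f₂ (h := hf₂), LinearEquiv.apply_symm_apply]
    rw [h1]
    exact Submodule.projection_add_projection_eq_self hC₂ w
  have πf₁ : ∀ v : V, π₁ (f₁ v) = v := by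
    intro v
    simp only [hπ₁, LinearMap.comp_apply, LinearEquiv.coe_coe,
      Submodule.linearProjOfIsCompl_apply_left hC₁ ⟨f₁ v, ⟨v, rfl⟩⟩]
    exact (LinearEquiv.symm_apply_eq _).mpr (Subtype.ext ((congrArg Subtype.val (Submodule.projectionOnto_apply_left hC₁ ⟨f₁ v, ⟨v, rfl⟩⟩)).trans (LinearEquiv.ofInjective_apply f₁ v).symm))
  have πf₂ : ∀ v : V, π₂ (f₂ v) = v := by
    intro v
    simp only [hπ₂, LinearMap.comp_apply, LinearEquiv.coe_coe,
      Submodule.linearProjOfIsCompl_apply_left hC₂ ⟨f₂ v, ⟨v, rfl⟩⟩]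
    exact (LinearEquiv.symm_apply_eq _).mpr (Subtype.ext ((congrArg Subtype.val (Submodule.projectionOnto_apply_left hC₂ ⟨f₂ v, ⟨v, rfl⟩⟩)).trans (LinearEquiv.ofInjective_apply f₂ v).symm))
  have κf₁ : ∀ v : V, κ₁ (f₁ v) = 0 :=
    fun v => Submodule.projectionOnto_apply_of_mem_right hC₁.symm ⟨v, rfl⟩
  have κf₂ : ∀ v : V, κ₂ (f₂ v) = 0 :=
    fun v => Submodule.projectionOnto_apply_of_mem_right hC₂.symm ⟨v, rfl⟩
  refine ⟨V × C₁ × C₂, inferInstance, inferInstance, ?_⟩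
  set e₁ : (V × C₁ × C₂) →ₗ[K] W₁ :=
    f₁ ∘ₗ LinearMap.fst K V (C₁ × C₂) +
      C₁.subtype ∘ₗ (LinearMap.fst K C₁ C₂ ∘ₗ LinearMap.snd K V (C₁ × C₂)) with he₁
  set e₂ : (V × C₁ × C₂) →ₗ[K] W₂ :=
    f₂ ∘ₗ LinearMap.fst K V (C₁ × C₂) +
      C₂.subtype ∘ₗ (LinearMap.snd K C₁ C₂ ∘ₗ LinearMap.snd K V (C₁ × C₂)) with he₂
  set p : (V × C₁ × C₂) →ₗ[K] V := LinearMap.fst K V (C₁ × C₂) with hp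
  refine ⟨B₁.compl₁₂ e₁ e₁ + B₂.compl₁₂ e₂ e₂ - BV.compl₁₂ p p,
    LinearMap.prod π₁ (LinearMap.prod κ₁ 0),
    LinearMap.prod π₂ (LinearMap.prod 0 κ₂), ?_, ?_, ?_, ?_, ?_, ?_, ?_⟩
  · intro x y
    simp only [LinearMap.sub_apply, LinearMap.add_apply, LinearMap.compl₁₂_apply]
    rw [h₁s, h₂s, hVs]
  · intro x y hxy
    have h1 : π₁ x = π₁ y := congrArg Prod.fst hxy
    have h2 : κ₁ x = κ₁ y := congrArg (fun z => z.2.1) hxy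
    rw [← key₁ x, ← key₁ y, h1, h2]
  · intro x y
    have hex : ∀ w : W₁, e₁ (π₁ w, κ₁ w, 0) = w := by
      intro w; simpa [he₁, hp] using key₁ w
    simp only [LinearMap.sub_apply, LinearMap.add_apply, LinearMap.compl₁₂_apply,
      LinearMap.prod_apply, Function.prod, LinearMap.zero_apply]
    rw [hex x, hex y]
    have : e₂ (π₁ x, κ₁ x, (0 : C₂)) = f₂ (π₁ x) := by simp [he₂, hp]
    rw [this]
    have : e₂ (π₁ y, κ₁ y, (0 : C₂)) = f₂ (π₁ y) := by simp [he₂, hp]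
    rw [this, hf₂b]
    simp [hp]
  · intro x y hxy
    have h1 : π₂ x = π₂ y := congrArg Prod.fst hxy
    have h2 : κ₂ x = κ₂ y := congrArg (fun z => z.2.2) hxy
    rw [← key₂ x, ← key₂ y, h1, h2]
  · intro x y
    have hex : ∀ w : W₂, e₂ (π₂ w, 0, κ₂ w) = w := by
      intro w; simpa [he₂, hp] using key₂ w
    simp only [LinearMap.sub_apply, LinearMap.add_apply, LinearMap.compl₁₂_apply,
      LinearMap.prod_apply, Function.prod, LinearMap.zero_apply]
    rw [hex x, hex y]
    have h1 : e₁ (π₂ x, (0 : C₁), κ₂ x) = f₁ (π₂ x) := by simp [he₁, hp]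
    have h2 : e₁ (π₂ y, (0 : C₁), κ₂ y) = f₁ (π₂ y) := by simp [he₁, hp]
    rw [h1, h2, hf₁b]
    simp [hp, add_sub_cancel_left]
  · apply LinearMap.ext
    intro v
    simp [πf₁, πf₂, κf₁, κf₂]
  · apply le_antisymm
    · rintro u ⟨⟨x, hx⟩, ⟨y, hy⟩⟩
      refine ⟨u.1, ?_⟩
      have hx1 : κ₁ x = u.2.1 := congrArg (fun z => z.2.1) hx
      have hx2 : u.2.2 = 0 := (congrArg (fun z => z.2.2) hx).symm
      have hy1 : u.2.1 = 0 := (congrArg (fun z => z.2.1) hy).symm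
      have hπ : π₁ x = u.1 := congrArg Prod.fst hx
      simp only [LinearMap.comp_apply, LinearMap.prod_apply, Function.prod, LinearMap.zero_apply]
      rw [πf₁, κf₁]
      exact Prod.ext rfl (Prod.ext hy1.symm hx2.symm)
    · rintro u ⟨v, rfl⟩
      simp only [LinearMap.comp_apply, LinearMap.prod_apply, Function.prod, LinearMap.zero_apply]
      rw [πf₁, κf₁]
      exact ⟨⟨f₁ v, by simp [πf₁, κf₁]⟩, ⟨f₂ v, by simp [πf₂, κf₂]⟩⟩
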